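/- arXiv:1801.10112 — 4 statements merged into one kernel-verified Lean document; each statement's English description precedes it below -/
import Mathlib

section
/- Let α be a finite nonempty type and E = EuclideanSpace ℝ (Fin P). Let p : E → α → ℝ and θ₀ ∈ E be such that on a neighborhood U of θ₀ we have p θ y > 0 for all y and ∑_{y∈α} p θ y = 1, and for each y the map θ ↦ p θ y is twice continuously differentiable on U. Let L_y = fderiv ℝ (fun θ => Real.log (p θ y)) θ₀ and define the Fisher quadratic form Q(Δ) = ∑_{y} p θ₀ y * (L_y Δ)^2 and the KL divergence D(Δ) = ∑_{y} p θ₀ y * Real.log (p θ₀ y / p (θ₀ + Δ) y). Then D(Δ) − (1/2) Q(Δ) = o(‖Δ‖²) as Δ → 0; that is, the second-order Taylor approximation of D_KL(p_{θ₀} ‖ p_{θ₀+Δθ}) is (1/2) Δθᵀ F_{θ₀} Δθ where F_{θ₀} is the Fisher information matrix. -/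
open scoped BigOperators


open Asymptotics Filter
open scoped Topology

lemma taylor2 {E : Type*} [NormedAddCommGroup E] [NormedSpace ℝ E]
    {g : E → ℝ} {x : E} {G : E → (E →L[ℝ] ℝ)} {B : E →L[ℝ] E →L[ℝ] ℝ}
    (hg : ∀ᶠ y in 𝓝 x, HasFDerivAt g (G y) y)
    (hB : HasFDerivAt G B x) :
    (fun Δ => g (x + Δ) - g x - G x Δ - (1/2) * B Δ Δ) =o[𝓝 0] fun Δ : E => ‖Δ‖^2 := by
  have hsymm : ∀ v w, B v w = B w v :=
    second_derivative_symmetric_of_eventually hg hB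
  rw [Asymptotics.isLittleO_iff]
  intro ε hε
  -- little-o property of G near x, translated to 0
  have hB0 : HasFDerivAt (fun Δ : E => G (x + Δ)) B 0 := by
    have hB' : HasFDerivAt G B (x + id (0:E)) := by simpa using hB
    have h := hB'.comp (0 : E) ((hasFDerivAt_id (0 : E)).const_add x)
    simpa [Function.comp_def] using h
  have hlo : ∀ᶠ Δ : E in 𝓝 0, ‖G (x + Δ) - G x - B Δ‖ ≤ ε * ‖Δ‖ := by
    have := (Asymptotics.isLittleO_iff.1 hB0.isLittleO) hε
    simpa using this
  have hg0 : ∀ᶠ Δ : E in 𝓝 0, HasFDerivAt g (G (x + Δ)) (x + Δ) := by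
    have ht : Filter.Tendsto (fun Δ : E => x + Δ) (𝓝 0) (𝓝 x) := by
      simpa using ((continuous_add_left x).tendsto (0 : E))
    exact ht.eventually hg
  obtain ⟨r, hr, hball⟩ := Metric.eventually_nhds_iff.1 (hlo.and hg0)
  have key : ∀ Δ : E, dist Δ (0 : E) < r →
      ‖g (x + Δ) - g x - G x Δ - (1/2) * B Δ Δ‖ ≤ ε * ‖‖Δ‖^2‖ := by
    intro Δ hΔ
    have hΔn : ‖Δ‖ < r := by simpa using hΔ
    set φ : E → ℝ := fun v => g (x + v) - G x v - (1/2) * B v v with hφ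
    set ψ : E → (E →L[ℝ] ℝ) := fun v => G (x + v) - G x - B v with hψ
    have hseg : ∀ v ∈ segment ℝ (0 : E) Δ, ‖v‖ ≤ ‖Δ‖ := by
      intro v hv
      obtain ⟨a, b, ha, hb, hab, rfl⟩ := hv
      simp only [smul_zero, zero_add]
      calc ‖b • Δ‖ = b * ‖Δ‖ := by rw [norm_smul, Real.norm_of_nonneg hb]
        _ ≤ 1 * ‖Δ‖ := by
            apply mul_le_mul_of_nonneg_right _ (norm_nonneg _)
            linarith
        _ = ‖Δ‖ := one_mul _
    have hmem : ∀ v ∈ segment ℝ (0 : E) Δ, dist v (0 : E) < r := by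
      intro v hv
      simpa using lt_of_le_of_lt (hseg v hv) hΔn
    have hderiv : ∀ v ∈ segment ℝ (0 : E) Δ, HasFDerivAt φ (ψ v) v := by
      intro v hv
      have h1 : HasFDerivAt (fun w : E => g (x + w)) (G (x + v)) v := by
        have := (hball (hmem v hv)).2
        simpa [Function.comp_def] using this.comp v ((hasFDerivAt_id v).const_add x)
      have h2 : HasFDerivAt (fun w : E => G x w) (G x) v := (G x).hasFDerivAt
      have hbil : IsBoundedBilinearMap ℝ (fun p : E × E => B p.1 p.2) :=
        B.isBoundedBilinearMap
      have h3 : HasFDerivAt (fun w : E => B w w)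
          ((hbil.deriv (v, v)).comp ((ContinuousLinearMap.id ℝ E).prod (ContinuousLinearMap.id ℝ E))) v := by
        have hp : HasFDerivAt (fun w : E => (w, w))
            ((ContinuousLinearMap.id ℝ E).prod (ContinuousLinearMap.id ℝ E)) v := by
          simpa using (hasFDerivAt_id v).prodMk (hasFDerivAt_id v)
        exact HasFDerivAt.comp (f := fun w : E => (w, w)) v (hbil.hasFDerivAt (v, v)) hp
      have h4 : HasFDerivAt φ (G (x + v) - G x - (1/2 : ℝ) •
          ((hbil.deriv (v, v)).comp ((ContinuousLinearMap.id ℝ E).prod (ContinuousLinearMap.id ℝ E)))) v :=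
        (h1.sub h2).sub (h3.const_mul (1/2 : ℝ)) |>.congr_fderiv (by
          ext w
          simp [smul_smul])
      refine h4.congr_fderiv ?_
      ext w
      simp only [hψ, ContinuousLinearMap.coe_sub', Pi.sub_apply,
        ContinuousLinearMap.coe_smul', Pi.smul_apply,
        ContinuousLinearMap.coe_comp', Function.comp_apply,
        ContinuousLinearMap.prod_apply, ContinuousLinearMap.coe_id', id_eq,
        IsBoundedBilinearMap.deriv_apply, smul_eq_mul]
      have := hsymm v w
      ring_nf
      linarith [hsymm w v]
    have hbound : ∀ v ∈ segment ℝ (0 : E) Δ, ‖ψ v‖ ≤ ε * ‖Δ‖ := by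
      intro v hv
      have := (hball (hmem v hv)).1
      calc ‖ψ v‖ ≤ ε * ‖v‖ := this
        _ ≤ ε * ‖Δ‖ := mul_le_mul_of_nonneg_left (hseg v hv) hε.le
    have hmv := Convex.norm_image_sub_le_of_norm_hasFDerivWithin_le
      (f := φ) (f' := ψ) (C := ε * ‖Δ‖) (s := segment ℝ (0 : E) Δ)
      (fun v hv => (hderiv v hv).hasFDerivWithinAt) hbound (convex_segment _ _)
      (left_mem_segment ℝ (0 : E) Δ) (right_mem_segment ℝ (0 : E) Δ)
    have hφ0 : φ 0 = g x := by simp [hφ]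
    have hφΔ : φ Δ = g (x + Δ) - G x Δ - (1/2) * B Δ Δ := rfl
    calc ‖g (x + Δ) - g x - G x Δ - (1/2) * B Δ Δ‖
        = ‖φ Δ - φ 0‖ := by rw [hφ0, hφΔ]; ring_nf
      _ ≤ ε * ‖Δ‖ * ‖Δ - 0‖ := hmv
      _ = ε * ‖‖Δ‖^2‖ := by
          rw [sub_zero, Real.norm_of_nonneg (by positivity)]
          ring
  filter_upwards [Metric.ball_mem_nhds (0 : E) hr] with Δ hΔ
  exact key Δ (by simpa [Metric.mem_ball] using hΔ)

/-- Second-order Taylor approximation of the KL divergence: the KL divergence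
between the model at `θ₀` and at `θ₀ + Δ` equals `(1/2) Δᵀ F Δ` (the Fisher
quadratic form) up to `o(‖Δ‖²)`. -/
theorem kl_second_order_taylor_fisher
    {α : Type*} [Fintype α] [Nonempty α] {P : ℕ}
    (p : EuclideanSpace ℝ (Fin P) → α → ℝ) (θ₀ : EuclideanSpace ℝ (Fin P))
    (U : Set (EuclideanSpace ℝ (Fin P))) (hU : U ∈ nhds θ₀)
    (hpos : ∀ θ ∈ U, ∀ y, 0 < p θ y)
    (hsum : ∀ θ ∈ U, ∑ y, p θ y = 1)
    (hsmooth : ∀ y, ContDiffOn ℝ 2 (fun θ => p θ y) U) :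
    (fun Δ : EuclideanSpace ℝ (Fin P) =>
        (∑ y, p θ₀ y * Real.log (p θ₀ y / p (θ₀ + Δ) y)) -
          (1 / 2) * ∑ y, p θ₀ y *
            ((fderiv ℝ (fun θ => Real.log (p θ y)) θ₀) Δ) ^ 2)
      =o[nhds (0 : EuclideanSpace ℝ (Fin P))]
        (fun Δ : EuclideanSpace ℝ (Fin P) => ‖Δ‖ ^ 2) := by
  set V : Set (EuclideanSpace ℝ (Fin P)) := interior U with hVdef
  have hV : IsOpen V := isOpen_interior
  have hxV : θ₀ ∈ V := mem_interior_iff_mem_nhds.2 hU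
  have hVU : V ⊆ U := interior_subset
  -- abbreviations
  set c : α → ℝ := fun z => p θ₀ z with hc
  have hcpos : ∀ z, 0 < c z := hpos θ₀ (hVU hxV) -- θ₀ ∈ U
  set F : α → (EuclideanSpace ℝ (Fin P)) → ((EuclideanSpace ℝ (Fin P)) →L[ℝ] ℝ) := fun z y => fderiv ℝ (fun θ => p θ z) y with hF
  have hC2 : ∀ z, ContDiffOn ℝ 2 (fun θ => p θ z) V := fun z => (hsmooth z).mono hVU
  have hqdiff : ∀ z, ∀ y ∈ V, HasFDerivAt (fun θ => p θ z) (F z y) y := by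
    intro z y hy
    exact (((hC2 z).differentiableOn (by norm_num)).differentiableAt
      (hV.mem_nhds hy)).hasFDerivAt
  have hFc1 : ∀ z, ContDiffOn ℝ 1 (F z) V := by
    intro z
    exact (hC2 z).fderiv_of_isOpen hV (by norm_num)
  set F' : α → ((EuclideanSpace ℝ (Fin P)) →L[ℝ] ((EuclideanSpace ℝ (Fin P)) →L[ℝ] ℝ)) := fun z => fderiv ℝ (F z) θ₀ with hF'
  have hFder : ∀ z, HasFDerivAt (F z) (F' z) θ₀ := by
    intro z
    exact (((hFc1 z).differentiableOn (by norm_num)).differentiableAt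
      (hV.mem_nhds hxV)).hasFDerivAt
  -- the sum of densities is 1, hence sums of derivatives vanish
  have hFsum : ∀ y ∈ V, ∑ z, F z y = 0 := by
    intro y hy
    have h1 : HasFDerivAt (fun θ => ∑ z, p θ z) (∑ z, F z y) y :=
      HasFDerivAt.fun_sum fun z _ => hqdiff z y hy
    have h2 : HasFDerivAt (fun θ => ∑ z, p θ z) (0 : EuclideanSpace ℝ (Fin P) →L[ℝ] ℝ) y := by
      refine (hasFDerivAt_const (1 : ℝ) y).congr_of_eventuallyEq ?_
      filter_upwards [hV.mem_nhds hy] with θ hθ using hsum θ (hVU hθ)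
    exact h1.unique h2
  have hF'sum : ∑ z, F' z = 0 := by
    have h1 : HasFDerivAt (fun y => ∑ z, F z y) (∑ z, F' z) θ₀ :=
      HasFDerivAt.fun_sum fun z _ => hFder z
    have h2 : HasFDerivAt (fun y => ∑ z, F z y) (0 : EuclideanSpace ℝ (Fin P) →L[ℝ] (EuclideanSpace ℝ (Fin P) →L[ℝ] ℝ)) θ₀ := by
      refine (hasFDerivAt_const (0 : (EuclideanSpace ℝ (Fin P)) →L[ℝ] ℝ) θ₀).congr_of_eventuallyEq ?_
      filter_upwards [hV.mem_nhds hxV] with y hy using hFsum y hy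
    exact h1.unique h2
  -- the score
  have hL : ∀ z, fderiv ℝ (fun θ => Real.log (p θ z)) θ₀ = (c z)⁻¹ • F z θ₀ := by
    intro z
    exact ((hqdiff z θ₀ hxV).log (hcpos z).ne').fderiv
  -- G and B
  set G : (EuclideanSpace ℝ (Fin P)) → ((EuclideanSpace ℝ (Fin P)) →L[ℝ] ℝ) := fun y => ∑ z, c z • ((p y z)⁻¹ • F z y) with hG
  have hg : ∀ y ∈ V, HasFDerivAt (fun θ => ∑ z, c z * Real.log (p θ z)) (G y) y := by
    intro y hy
    exact HasFDerivAt.fun_sum fun z _ =>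
      ((hqdiff z y hy).log (hpos y (hVU hy) z).ne').const_mul (c z)
  set B : (EuclideanSpace ℝ (Fin P)) →L[ℝ] ((EuclideanSpace ℝ (Fin P)) →L[ℝ] ℝ) := ∑ z, c z • ((c z)⁻¹ • F' z +
      ((-(c z ^ 2)⁻¹) • F z θ₀).smulRight (F z θ₀)) with hB
  have hGder : HasFDerivAt G B θ₀ := by
    refine HasFDerivAt.fun_sum fun z _ => ?_
    have hinv : HasFDerivAt (fun y => (p y z)⁻¹) ((-(c z ^ 2)⁻¹) • F z θ₀) θ₀ :=
      (hasDerivAt_inv (hcpos z).ne').comp_hasFDerivAt θ₀ (hqdiff z θ₀ hxV)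
    exact (hinv.smul (hFder z)).const_smul (c z)
  -- apply the abstract Taylor lemma
  have htaylor := (taylor2 (g := fun θ => ∑ z, c z * Real.log (p θ z)) (x := θ₀)
    (G := G) (B := B)
    (by filter_upwards [hV.mem_nhds hxV] with y hy using hg y hy) hGder).neg_left
  -- identify G θ₀ = 0
  have hG0 : G θ₀ = 0 := by
    have : G θ₀ = ∑ z, F z θ₀ := by
      refine Finset.sum_congr rfl fun z _ => ?_
      rw [smul_smul, mul_inv_cancel₀ (hcpos z).ne', one_smul]
    rw [this, hFsum θ₀ hxV]
  -- identify B Δ Δ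
  have hBΔ : ∀ Δ : (EuclideanSpace ℝ (Fin P)), B Δ Δ = -∑ z, c z *
      ((fderiv ℝ (fun θ => Real.log (p θ z)) θ₀) Δ) ^ 2 := by
    intro Δ
    have h1 : B Δ Δ = ∑ z, (F' z Δ Δ - (c z)⁻¹ * (F z θ₀ Δ) ^ 2) := by
      rw [hB]
      simp only [ContinuousLinearMap.sum_apply, ContinuousLinearMap.smul_apply,
        ContinuousLinearMap.add_apply, ContinuousLinearMap.smulRight_apply,
        ContinuousLinearMap.neg_apply, smul_eq_mul, Finset.sum_apply]
      refine Finset.sum_congr rfl fun z _ => ?_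
      have hcz := (hcpos z).ne'
      field_simp
      ring
    have h2 : ∑ z, (F' z Δ Δ : ℝ) = 0 := by
      have : (∑ z, F' z) Δ Δ = 0 := by rw [hF'sum]; simp
      simpa [ContinuousLinearMap.sum_apply] using this
    rw [h1, Finset.sum_sub_distrib, h2, zero_sub, neg_inj]
    refine Finset.sum_congr rfl fun z _ => ?_
    rw [hL z]
    have hcz := (hcpos z).ne'
    simp only [ContinuousLinearMap.smul_apply, smul_eq_mul]
    field_simp
  -- conclude by congruence
  refine htaylor.congr' ?_ (Filter.Eventually.of_forall fun Δ => rfl)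
  have hmem : ∀ᶠ Δ : (EuclideanSpace ℝ (Fin P)) in nhds 0, θ₀ + Δ ∈ V := by
    have ht : Filter.Tendsto (fun Δ : (EuclideanSpace ℝ (Fin P)) => θ₀ + Δ) (nhds 0) (nhds θ₀) := by
      simpa using ((continuous_add_left θ₀).tendsto (0 : (EuclideanSpace ℝ (Fin P))))
    exact ht.eventually (hV.eventually_mem hxV)
  filter_upwards [hmem] with Δ hΔ
  have hlog : ∀ z, Real.log (p θ₀ z / p (θ₀ + Δ) z)
      = Real.log (p θ₀ z) - Real.log (p (θ₀ + Δ) z) := fun z =>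
    Real.log_div (hcpos z).ne' (hpos _ (hVU hΔ) z).ne'
  rw [hBΔ Δ, hG0]
  simp only [hlog, ContinuousLinearMap.zero_apply, mul_sub, Finset.sum_sub_distrib]
  ring
end

section
/- Let α be a finite nonempty type and E = EuclideanSpace ℝ (Fin P). Let p : E → α → ℝ and θ₀ ∈ E be such that on a neighborhood U of θ₀ we have p θ y > 0 for all y and ∑_{y∈α} p θ y = 1, and for each y the map θ ↦ p θ y is twice continuously differentiable on U. Then the information matrix equality holds: for all u, v ∈ E, ∑_{y} p θ₀ y * (D²_y(u, v)) = − ∑_{y} p θ₀ y * (L_y u) * (L_y v), where L_y = fderiv ℝ (fun θ => Real.log (p θ y)) θ₀ is the score and D²_y is the second Fréchet derivative of θ ↦ Real.log (p θ y) at θ₀; i.e., the expected negative Hessian of the log-likelihood equals the Fisher information bilinear form. -/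
open scoped BigOperators

/-- Information matrix equality: the expected Hessian of the log-likelihood
equals the negative of the Fisher information bilinear form. -/
theorem information_matrix_equality
    {α : Type*} [Fintype α] [Nonempty α] {P : ℕ}
    (p : EuclideanSpace ℝ (Fin P) → α → ℝ) (θ₀ : EuclideanSpace ℝ (Fin P))
    (U : Set (EuclideanSpace ℝ (Fin P))) (hU : U ∈ nhds θ₀)
    (hpos : ∀ θ ∈ U, ∀ y, 0 < p θ y)
    (hsum : ∀ θ ∈ U, ∑ y, p θ y = 1)
    (hsmooth : ∀ y, ContDiffOn ℝ 2 (fun θ => p θ y) U) :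
    ∀ u v : EuclideanSpace ℝ (Fin P),
      ∑ y, p θ₀ y * (iteratedFDeriv ℝ 2 (fun θ => Real.log (p θ y)) θ₀ ![u, v])
        = -∑ y, p θ₀ y * ((fderiv ℝ (fun θ => Real.log (p θ y)) θ₀) u)
            * ((fderiv ℝ (fun θ => Real.log (p θ y)) θ₀) v) := by
  intro u v
  have hθ₀V : θ₀ ∈ interior U := mem_interior_iff_mem_nhds.mpr hU
  set V := interior U with hVdef
  have hVo : IsOpen V := isOpen_interior
  have hVU : V ⊆ U := interior_subset
  have hVnhds : V ∈ nhds θ₀ := hVo.mem_nhds hθ₀V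
  have hCD : ∀ y, ∀ θ ∈ V, ContDiffAt ℝ 2 (fun θ => p θ y) θ := fun y θ hθ =>
    (hsmooth y).contDiffAt (Filter.mem_of_superset (hVo.mem_nhds hθ) hVU)
  set g : α → EuclideanSpace ℝ (Fin P) → (EuclideanSpace ℝ (Fin P) →L[ℝ] ℝ) :=
    fun y => fderiv ℝ (fun θ => p θ y) with hgdef
  have hDp : ∀ y, ∀ θ ∈ V, HasFDerivAt (fun θ => p θ y) (g y θ) θ := fun y θ hθ =>
    ((hCD y θ hθ).differentiableAt (by norm_num)).hasFDerivAt
  have hlog : ∀ y, ∀ θ ∈ V, HasFDerivAt (fun θ => Real.log (p θ y))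
      ((p θ y)⁻¹ • g y θ) θ := fun y θ hθ =>
    (hDp y θ hθ).log (hpos θ (hVU hθ) y).ne'
  have hLeq : ∀ y, ∀ θ ∈ V, fderiv ℝ (fun θ => Real.log (p θ y)) θ
      = (p θ y)⁻¹ • g y θ := fun y θ hθ => (hlog y θ hθ).fderiv
  set H : α → EuclideanSpace ℝ (Fin P) →L[ℝ] EuclideanSpace ℝ (Fin P) →L[ℝ] ℝ :=
    fun y => fderiv ℝ (g y) θ₀ with hHdef
  have hH : ∀ y, HasFDerivAt (g y) (H y) θ₀ := fun y =>
    (((hCD y θ₀ hθ₀V).fderiv_right (m := 1) (by norm_num)).differentiableAt (by norm_num)).hasFDerivAt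
  have hcinv : ∀ y, HasFDerivAt (fun θ => (p θ y)⁻¹)
      ((-(p θ₀ y ^ 2)⁻¹) • g y θ₀) θ₀ := fun y =>
    (hasDerivAt_inv (hpos θ₀ (hVU hθ₀V) y).ne').comp_hasFDerivAt θ₀ (hDp y θ₀ hθ₀V)
  have hprod : ∀ y, HasFDerivAt (fun θ => (p θ y)⁻¹ • g y θ)
      ((p θ₀ y)⁻¹ • H y + ((-(p θ₀ y ^ 2)⁻¹) • g y θ₀).smulRight (g y θ₀)) θ₀ :=
    fun y => (hcinv y).smul (hH y)
  have hsnd : ∀ y, fderiv ℝ (fderiv ℝ (fun θ => Real.log (p θ y))) θ₀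
      = (p θ₀ y)⁻¹ • H y + ((-(p θ₀ y ^ 2)⁻¹) • g y θ₀).smulRight (g y θ₀) := by
    intro y
    have heq : fderiv ℝ (fun θ => Real.log (p θ y)) =ᶠ[nhds θ₀]
        (fun θ => (p θ y)⁻¹ • g y θ) := by
      filter_upwards [hVnhds] with θ hθ
      exact hLeq y θ hθ
    exact ((hprod y).congr_of_eventuallyEq heq).fderiv
  -- sum of first derivatives vanishes on V
  have hSzero : ∀ θ ∈ V, ∑ y, g y θ = 0 := by
    intro θ hθ
    have h1 : HasFDerivAt (fun θ => ∑ y, p θ y) (∑ y, g y θ) θ :=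
      HasFDerivAt.fun_sum fun y _ => hDp y θ hθ
    have h2 : HasFDerivAt (fun θ => ∑ y, p θ y)
        (0 : EuclideanSpace ℝ (Fin P) →L[ℝ] ℝ) θ := by
      have hev : (fun θ => ∑ y, p θ y) =ᶠ[nhds θ] fun _ => (1 : ℝ) := by
        filter_upwards [Filter.mem_of_superset (hVo.mem_nhds hθ) hVU] with x hx
        exact hsum x hx
      exact (hasFDerivAt_const (1 : ℝ) θ).congr_of_eventuallyEq hev
    exact h1.unique h2
  have hHzero : (∑ y, H y) = 0 := by
    have h1 : HasFDerivAt (fun θ => ∑ y, g y θ) (∑ y, H y) θ₀ :=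
      HasFDerivAt.fun_sum fun y _ => hH y
    have h2 : HasFDerivAt (fun θ => ∑ y, g y θ)
        (0 : EuclideanSpace ℝ (Fin P) →L[ℝ] EuclideanSpace ℝ (Fin P) →L[ℝ] ℝ) θ₀ := by
      have hev : (fun θ => ∑ y, g y θ) =ᶠ[nhds θ₀]
          fun _ => (0 : EuclideanSpace ℝ (Fin P) →L[ℝ] ℝ) := by
        filter_upwards [hVnhds] with x hx; exact hSzero x hx
      exact (hasFDerivAt_const _ θ₀).congr_of_eventuallyEq hev
    exact h1.unique h2
  have hne : ∀ y, p θ₀ y ≠ 0 := fun y => (hpos θ₀ (hVU hθ₀V) y).ne'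
  have key : ∀ y, p θ₀ y * iteratedFDeriv ℝ 2 (fun θ => Real.log (p θ y)) θ₀ ![u, v]
      = H y u v - (p θ₀ y)⁻¹ * (g y θ₀ u) * (g y θ₀ v) := by
    intro y
    rw [iteratedFDeriv_two_apply, hsnd y]
    simp only [ContinuousLinearMap.add_apply, ContinuousLinearMap.smul_apply,
      ContinuousLinearMap.smulRight_apply, Matrix.cons_val_zero, Matrix.cons_val_one,
      Matrix.head_cons, smul_eq_mul, ContinuousLinearMap.coe_smul', Pi.smul_apply,
      ContinuousLinearMap.neg_apply]
    field_simp [hne y]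
    try ring
  have key2 : ∀ y, p θ₀ y * ((fderiv ℝ (fun θ => Real.log (p θ y)) θ₀) u)
      * ((fderiv ℝ (fun θ => Real.log (p θ y)) θ₀) v)
      = (p θ₀ y)⁻¹ * (g y θ₀ u) * (g y θ₀ v) := by
    intro y
    rw [hLeq y θ₀ hθ₀V]
    simp only [ContinuousLinearMap.smul_apply, smul_eq_mul]
    field_simp [hne y]
    try ring
  calc ∑ y, p θ₀ y * iteratedFDeriv ℝ 2 (fun θ => Real.log (p θ y)) θ₀ ![u, v]
      = ∑ y, (H y u v - (p θ₀ y)⁻¹ * (g y θ₀ u) * (g y θ₀ v)) :=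
        Finset.sum_congr rfl fun y _ => key y
    _ = (∑ y, H y) u v - ∑ y, (p θ₀ y)⁻¹ * (g y θ₀ u) * (g y θ₀ v) := by
        rw [Finset.sum_sub_distrib]
        simp [ContinuousLinearMap.sum_apply]
    _ = -∑ y, p θ₀ y * ((fderiv ℝ (fun θ => Real.log (p θ y)) θ₀) u)
            * ((fderiv ℝ (fun θ => Real.log (p θ y)) θ₀) v) := by
        rw [hHzero]
        simp only [ContinuousLinearMap.zero_apply, zero_sub, neg_inj]
        exact Finset.sum_congr rfl fun y _ => (key2 y).symm
end

section
/- Let α be a finite nonempty type and E = EuclideanSpace ℝ (Fin P). Let p : E → α → ℝ and θ₀ ∈ E be such that on a neighborhood U of θ₀ we have p θ y > 0 for all y and ∑_{y∈α} p θ y = 1, and for each y the map θ ↦ p θ y is differentiable at θ₀. Define φ(θ') = ∑_{y} p θ₀ y * Real.log (p θ₀ y / p θ' y), the KL divergence from p θ₀ to p θ'. Then φ is differentiable at θ₀ and fderiv ℝ φ θ₀ = 0; i.e., the first-order term in the Taylor expansion of the KL divergence vanishes. -/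
open scoped BigOperators

/-- The first-order term of the Taylor expansion of the KL divergence
`φ θ' = D_KL(p θ₀ ‖ p θ')` vanishes at `θ₀`: `φ` is differentiable at `θ₀`
with zero derivative there. -/
theorem kl_fderiv_eq_zero
    {α : Type*} [Fintype α] [Nonempty α] {P : ℕ}
    (p : EuclideanSpace ℝ (Fin P) → α → ℝ) (θ₀ : EuclideanSpace ℝ (Fin P))
    (U : Set (EuclideanSpace ℝ (Fin P))) (hU : U ∈ nhds θ₀)
    (hpos : ∀ θ ∈ U, ∀ y, 0 < p θ y)
    (hsum : ∀ θ ∈ U, ∑ y, p θ y = 1)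
    (hdiff : ∀ y, DifferentiableAt ℝ (fun θ => p θ y) θ₀) :
    DifferentiableAt ℝ
        (fun θ' => ∑ y, p θ₀ y * Real.log (p θ₀ y / p θ' y)) θ₀ ∧
      fderiv ℝ (fun θ' => ∑ y, p θ₀ y * Real.log (p θ₀ y / p θ' y)) θ₀ = 0 := by
  have hθ₀U : θ₀ ∈ U := mem_of_mem_nhds hU
  set D : α → (EuclideanSpace ℝ (Fin P)) →L[ℝ] ℝ :=
    fun y => fderiv ℝ (fun θ => p θ y) θ₀ with hD
  have hder : ∀ y, HasFDerivAt (fun θ => p θ y) (D y) θ₀ :=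
    fun y => (hdiff y).hasFDerivAt
  -- sum of derivatives is zero
  have hsumD : ∑ y, D y = 0 := by
    have h1 : HasFDerivAt (fun θ => ∑ y, p θ y) (∑ y, D y) θ₀ :=
      HasFDerivAt.fun_sum (fun y _ => hder y)
    have h2 : HasFDerivAt (fun θ => ∑ y, p θ y)
        (0 : (EuclideanSpace ℝ (Fin P)) →L[ℝ] ℝ) θ₀ := by
      have : HasFDerivAt (fun _ : EuclideanSpace ℝ (Fin P) => (1 : ℝ))
          (0 : (EuclideanSpace ℝ (Fin P)) →L[ℝ] ℝ) θ₀ := hasFDerivAt_const 1 θ₀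
      refine this.congr_of_eventuallyEq ?_
      filter_upwards [hU] with θ hθ using (hsum θ hθ)
    exact h1.unique h2
  -- each term of the auxiliary function
  have hterm : ∀ y, HasFDerivAt
      (fun θ' => p θ₀ y * Real.log (p θ₀ y) - p θ₀ y * Real.log (p θ' y))
      (-(D y)) θ₀ := by
    intro y
    have hne : p θ₀ y ≠ 0 := (hpos θ₀ hθ₀U y).ne'
    have hlog : HasFDerivAt (fun θ' => Real.log (p θ' y))
        ((p θ₀ y)⁻¹ • D y) θ₀ := (hder y).log hne
    have hmul := hlog.const_mul (p θ₀ y)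
    have heq : p θ₀ y • (p θ₀ y)⁻¹ • D y = D y := by
      rw [smul_smul, mul_inv_cancel₀ hne, one_smul]
    rw [heq] at hmul
    simpa using (hasFDerivAt_const (p θ₀ y * Real.log (p θ₀ y)) θ₀).fun_sub hmul
  have hψ : HasFDerivAt
      (fun θ' => ∑ y, (p θ₀ y * Real.log (p θ₀ y) - p θ₀ y * Real.log (p θ' y)))
      (0 : (EuclideanSpace ℝ (Fin P)) →L[ℝ] ℝ) θ₀ := by
    have := HasFDerivAt.fun_sum (fun y (_ : y ∈ Finset.univ) => hterm y)
    have hz : (∑ y, -(D y)) = (0 : (EuclideanSpace ℝ (Fin P)) →L[ℝ] ℝ) := by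
      rw [Finset.sum_neg_distrib, hsumD, neg_zero]
    rwa [hz] at this
  have hφ : HasFDerivAt
      (fun θ' => ∑ y, p θ₀ y * Real.log (p θ₀ y / p θ' y))
      (0 : (EuclideanSpace ℝ (Fin P)) →L[ℝ] ℝ) θ₀ := by
    refine hψ.congr_of_eventuallyEq ?_
    filter_upwards [hU] with θ hθ
    refine Finset.sum_congr rfl fun y _ => ?_
    rw [Real.log_div (hpos θ₀ hθ₀U y).ne' (hpos θ hθ y).ne', mul_sub]
  exact ⟨hφ.differentiableAt, hφ.fderiv⟩
end

section
/- Let α be a finite nonempty type and E = EuclideanSpace ℝ (Fin P). Let p : E → α → ℝ and θ₀ ∈ E be such that on a neighborhood U of θ₀ we have p θ y > 0 for all y and ∑_{y∈α} p θ y = 1, and for each y the map θ ↦ p θ y is twice continuously differentiable on U. Define φ(θ') = ∑_{y} p θ₀ y * Real.log (p θ₀ y / p θ' y). Then the second Fréchet derivative of φ at θ₀ equals the Fisher bilinear form: for all u, v ∈ E, D²φ(θ₀)(u, v) = ∑_{y} p θ₀ y * (L_y u) * (L_y v), where L_y = fderiv ℝ (fun θ => Real.log (p θ y)) θ₀. 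-/
open scoped BigOperators

/-- The second Fréchet derivative of the KL divergence
`φ θ' = D_KL(p θ₀ ‖ p θ')` at `θ₀` equals the Fisher bilinear form. -/
theorem kl_second_derivative_eq_fisher
    {α : Type*} [Fintype α] [Nonempty α] {P : ℕ}
    (p : EuclideanSpace ℝ (Fin P) → α → ℝ) (θ₀ : EuclideanSpace ℝ (Fin P))
    (U : Set (EuclideanSpace ℝ (Fin P))) (hU : U ∈ nhds θ₀)
    (hpos : ∀ θ ∈ U, ∀ y, 0 < p θ y)
    (hsum : ∀ θ ∈ U, ∑ y, p θ y = 1)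
    (hsmooth : ∀ y, ContDiffOn ℝ 2 (fun θ => p θ y) U) :
    ∀ u v : EuclideanSpace ℝ (Fin P),
      iteratedFDeriv ℝ 2
          (fun θ' => ∑ y, p θ₀ y * Real.log (p θ₀ y / p θ' y)) θ₀ ![u, v]
        = ∑ y, p θ₀ y * ((fderiv ℝ (fun θ => Real.log (p θ y)) θ₀) u)
            * ((fderiv ℝ (fun θ => Real.log (p θ y)) θ₀) v) := by
  classical
  intro u v
  set V := interior U with hVdef
  have hVo : IsOpen V := isOpen_interior
  have hθV : θ₀ ∈ V := mem_interior_iff_mem_nhds.2 hU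
  have hVU : V ⊆ U := interior_subset
  have hVnhds : V ∈ nhds θ₀ := hVo.mem_nhds hθV
  set D : α → EuclideanSpace ℝ (Fin P) → (EuclideanSpace ℝ (Fin P) →L[ℝ] ℝ) :=
    fun y θ => fderiv ℝ (fun t => p t y) θ with hDdef
  -- first-order differentiability of each `p · y` on `V`
  have hdiff : ∀ y, ∀ θ ∈ V, HasFDerivAt (fun t => p t y) (D y θ) θ := by
    intro y θ hθ
    have h1 : DifferentiableOn ℝ (fun t => p t y) U :=
      (hsmooth y).differentiableOn two_ne_zero
    exact (h1.differentiableAt (mem_nhds_iff.2 ⟨V, hVU, hVo, hθ⟩)).hasFDerivAt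
  -- second-order differentiability
  have hD1 : ∀ y, ContDiffOn ℝ 1 (D y) V := by
    intro y
    exact ((hsmooth y).mono hVU).fderiv_of_isOpen hVo (by norm_num)
  set B : α → (EuclideanSpace ℝ (Fin P) →L[ℝ] EuclideanSpace ℝ (Fin P) →L[ℝ] ℝ) :=
    fun y => fderiv ℝ (D y) θ₀ with hBdef
  have hB : ∀ y, HasFDerivAt (D y) (B y) θ₀ := by
    intro y
    exact (((hD1 y).differentiableOn one_ne_zero).differentiableAt hVnhds).hasFDerivAt
  -- the sum of the `D y θ` vanishes on `V`
  have hDsum : ∀ θ ∈ V, ∑ y, D y θ = 0 := by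
    intro θ hθ
    have h1 : HasFDerivAt (fun t => ∑ y, p t y) (∑ y, D y θ) θ :=
      HasFDerivAt.fun_sum fun y _ => hdiff y θ hθ
    have h3 : (fun t => ∑ y, p t y) =ᶠ[nhds θ] fun _ => (1 : ℝ) :=
      Filter.eventuallyEq_of_mem (hVo.mem_nhds hθ) fun t ht => hsum t (hVU ht)
    have h4 : HasFDerivAt (fun t => ∑ y, p t y)
        (0 : EuclideanSpace ℝ (Fin P) →L[ℝ] ℝ) θ :=
      (hasFDerivAt_const (1 : ℝ) θ).congr_of_eventuallyEq h3
    exact h1.unique h4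
  -- hence the sum of the `B y` vanishes
  have hBsum : ∑ y, B y = 0 := by
    have h1 : HasFDerivAt (fun θ => ∑ y, D y θ) (∑ y, B y) θ₀ :=
      HasFDerivAt.fun_sum fun y _ => hB y
    have h2 : (fun θ => ∑ y, D y θ)
        =ᶠ[nhds θ₀] fun _ => (0 : EuclideanSpace ℝ (Fin P) →L[ℝ] ℝ) :=
      Filter.eventuallyEq_of_mem hVnhds hDsum
    have h3 : HasFDerivAt (fun θ => ∑ y, D y θ)
        (0 : EuclideanSpace ℝ (Fin P) →L[ℝ]
          EuclideanSpace ℝ (Fin P) →L[ℝ] ℝ) θ₀ :=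
      (hasFDerivAt_const _ θ₀).congr_of_eventuallyEq h2
    exact h1.unique h3
  -- explicit first derivative of the KL divergence on `V`
  set Φ : EuclideanSpace ℝ (Fin P) → (EuclideanSpace ℝ (Fin P) →L[ℝ] ℝ) :=
    fun θ => ∑ y, (-(p θ₀ y) * (p θ y)⁻¹) • D y θ with hΦdef
  have hφderiv : ∀ θ ∈ V,
      HasFDerivAt (fun θ' => ∑ y, p θ₀ y * Real.log (p θ₀ y / p θ' y)) (Φ θ) θ := by
    intro θ hθ
    refine HasFDerivAt.fun_sum fun y _ => ?_
    have hlog : HasFDerivAt (fun θ' => Real.log (p θ' y)) ((p θ y)⁻¹ • D y θ) θ :=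
      (hdiff y θ hθ).log (ne_of_gt (hpos θ (hVU hθ) y))
    have h1 : HasFDerivAt
        (fun θ' => p θ₀ y * Real.log (p θ₀ y) - p θ₀ y * Real.log (p θ' y))
        ((0 : EuclideanSpace ℝ (Fin P) →L[ℝ] ℝ)
          - (p θ₀ y) • ((p θ y)⁻¹ • D y θ)) θ :=
      (hasFDerivAt_const _ θ).sub (hlog.const_mul (p θ₀ y))
    have heq : (fun θ' => p θ₀ y * Real.log (p θ₀ y / p θ' y))
        =ᶠ[nhds θ] fun θ' => p θ₀ y * Real.log (p θ₀ y) - p θ₀ y * Real.log (p θ' y) := by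
      filter_upwards [hVo.mem_nhds hθ] with t ht
      rw [Real.log_div (ne_of_gt (hpos θ₀ (hVU hθV) y))
        (ne_of_gt (hpos t (hVU ht) y)), mul_sub]
    have h2 := h1.congr_of_eventuallyEq heq
    refine h2.congr_fderiv ?_
    ext w
    simp [smul_smul]
  -- the first derivative agrees with `Φ` near `θ₀`
  have hfd : fderiv ℝ (fun θ' => ∑ y, p θ₀ y * Real.log (p θ₀ y / p θ' y))
      =ᶠ[nhds θ₀] Φ := by
    filter_upwards [hVnhds] with θ hθ using (hφderiv θ hθ).fderiv
  -- differentiate `Φ` at `θ₀`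
  have hc : ∀ y, HasFDerivAt (fun θ => -(p θ₀ y) * (p θ y)⁻¹)
      ((-(p θ₀ y)) • ((-(p θ₀ y ^ 2)⁻¹) • D y θ₀)) θ₀ := by
    intro y
    exact ((hasDerivAt_inv (ne_of_gt (hpos θ₀ (hVU hθV) y))).comp_hasFDerivAt θ₀
      (hdiff y θ₀ hθV)).const_mul _
  have hΦderiv : HasFDerivAt Φ
      (∑ y, ((-(p θ₀ y) * (p θ₀ y)⁻¹) • B y
        + ((-(p θ₀ y)) • ((-(p θ₀ y ^ 2)⁻¹) • D y θ₀)).smulRight (D y θ₀))) θ₀ :=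
    HasFDerivAt.fun_sum fun y _ => (hc y).smul (hB y)
  -- value of the score
  have hL : ∀ y, fderiv ℝ (fun θ => Real.log (p θ y)) θ₀
      = (p θ₀ y)⁻¹ • D y θ₀ := by
    intro y
    exact ((hdiff y θ₀ hθV).log (ne_of_gt (hpos θ₀ (hVU hθV) y))).fderiv
  -- put everything together
  rw [iteratedFDeriv_two_apply]
  simp only [Matrix.cons_val_zero, Matrix.cons_val_one, Matrix.head_cons]
  rw [hfd.fderiv_eq, hΦderiv.fderiv]
  have hexp : (∑ y, ((-(p θ₀ y) * (p θ₀ y)⁻¹) • B y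
        + ((-(p θ₀ y)) • ((-(p θ₀ y ^ 2)⁻¹) • D y θ₀)).smulRight (D y θ₀))) u v
      = ∑ y, ((-(p θ₀ y) * (p θ₀ y)⁻¹) * ((B y) u v)
        + (-(p θ₀ y) * (-(p θ₀ y ^ 2)⁻¹ * ((D y θ₀) u))) * ((D y θ₀) v)) := by
    simp only [ContinuousLinearMap.sum_apply, ContinuousLinearMap.add_apply,
      ContinuousLinearMap.coe_smul', Pi.smul_apply, ContinuousLinearMap.smulRight_apply,
      ContinuousLinearMap.smul_apply, smul_eq_mul]
  rw [hexp, Finset.sum_add_distrib]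
  have hzero : ∑ y, (-(p θ₀ y) * (p θ₀ y)⁻¹) * ((B y) u v) = 0 := by
    have h1 : ∀ y : α, (-(p θ₀ y) * (p θ₀ y)⁻¹) * ((B y) u v) = -((B y) u v) := by
      intro y
      rw [neg_mul, mul_inv_cancel₀ (ne_of_gt (hpos θ₀ (hVU hθV) y))]
      ring
    simp only [h1]
    rw [Finset.sum_neg_distrib]
    have : ∑ y, (B y) u v = ((∑ y, B y) u) v := by
      simp [ContinuousLinearMap.sum_apply]
    rw [this, hBsum]
    simp
  rw [hzero, zero_add]
  refine Finset.sum_congr rfl fun y _ => ?_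
  rw [hL y]
  simp only [ContinuousLinearMap.smul_apply, smul_eq_mul]
  have hp := ne_of_gt (hpos θ₀ (hVU hθV) y)
  field_simp
end
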